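/- Let A be an N×s complex matrix and B an N×t complex matrix with A*A = I_s and B*B = I_t, and put U = (2·B·B* − I_N)·(2·A·A* − I_N). If N ≥ s + t, then (X − 1)^(N−s−t) divides the characteristic polynomial det(X·I_N − U) in ℂ[X]; in particular, when N > s + t, 1 is an eigenvalue of U of algebraic multiplicity at least N − s − t. -/

import Mathlib

open Matrix Polynomial

lemma key_det {K : Type*} [Field K] {k : Type*} [Fintype k] [DecidableEq k]
    {x : K} (hx : x ≠ 0) (M : Matrix k k K) :
    (x • (1 : Matrix k k K) - M).det = x ^ Fintype.card k * (1 - x⁻¹ • M).det := by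
  have h0 : x • (1 : Matrix k k K) - M = x • ((1 : Matrix k k K) - x⁻¹ • M) := by
    rw [smul_sub, smul_smul, mul_inv_cancel₀ hx, one_smul]
  rw [h0, Matrix.det_smul]

lemma det_smul_one_sub_mul_comm {K : Type*} [Field K] {n m : Type*} [Fintype n] [Fintype m]
    [DecidableEq n] [DecidableEq m] {x : K} (hx : x ≠ 0)
    (P : Matrix n m K) (Q : Matrix m n K) (h : Fintype.card m ≤ Fintype.card n) :
    (x • (1 : Matrix n n K) - P * Q).det
      = x ^ (Fintype.card n - Fintype.card m) * (x • (1 : Matrix m m K) - Q * P).det := by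
  have hcomm : ((1 : Matrix n n K) - x⁻¹ • (P * Q)).det
      = ((1 : Matrix m m K) - x⁻¹ • (Q * P)).det := by
    have h1 : x⁻¹ • (P * Q) = (x⁻¹ • P) * Q := (Matrix.smul_mul _ _ _).symm
    have h2 : x⁻¹ • (Q * P) = Q * (x⁻¹ • P) := (Matrix.mul_smul _ _ _).symm
    rw [h1, h2, Matrix.det_one_sub_mul_comm]
  rw [key_det hx, key_det hx, hcomm, ← mul_assoc, ← pow_add, Nat.sub_add_cancel h]

/-- Mapping the charmatrix determinant through a ring hom out of `ℂ[X]`. -/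
lemma aux_map_charpoly {n : Type*} [Fintype n] [DecidableEq n] (M : Matrix n n ℂ)
    {S : Type*} [CommRing S] (φ : ℂ[X] →+* S) :
    φ M.charpoly = (φ X • (1 : Matrix n n S) - M.map (φ.comp C)).det := by
  rw [Matrix.charpoly, RingHom.map_det]
  congr 1
  ext i j
  by_cases h : i = j
  · subst h
    simp [charmatrix_apply_eq, Matrix.one_apply_eq]
  · simp [charmatrix_apply_ne _ _ _ h, Matrix.one_apply_ne h]

/-- Sylvester-type identity for characteristic polynomials of rectangular products. -/
lemma charpoly_mul_comm_pow {n m : Type*} [Fintype n] [Fintype m] [DecidableEq n]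
    [DecidableEq m] (P : Matrix n m ℂ) (Q : Matrix m n ℂ)
    (h : Fintype.card m ≤ Fintype.card n) :
    X ^ (Fintype.card n - Fintype.card m) * (Q * P).charpoly = (P * Q).charpoly := by
  have hinj : Function.Injective (algebraMap ℂ[X] (RatFunc ℂ)) := IsFractionRing.injective _ _
  apply hinj
  have hx : algebraMap ℂ[X] (RatFunc ℂ) X ≠ 0 := by
    intro hx0
    exact X_ne_zero (hinj (by simpa using hx0))
  rw [_root_.map_mul, map_pow, aux_map_charpoly, aux_map_charpoly, Matrix.map_mul,
    Matrix.map_mul, det_smul_one_sub_mul_comm hx _ _ h]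

/-- Translating the characteristic polynomial: composing with `X + 1`. -/
lemma aux_charpoly_sub_one {n : Type*} [Fintype n] [DecidableEq n] (M : Matrix n n ℂ) :
    (aeval (R := ℂ) (X + 1 : ℂ[X])).toRingHom M.charpoly = (M - 1).charpoly := by
  rw [Matrix.charpoly, RingHom.map_det, Matrix.charpoly]
  congr 1
  ext i j
  by_cases h : i = j
  · subst h
    simp [charmatrix_apply_eq, Matrix.one_apply_eq]
    ring
  · simp [charmatrix_apply_ne _ _ _ h, Matrix.one_apply_ne h]

/-- If `N ≥ s + t`, then `(X - 1)^(N - s - t)` divides the characteristic polynomial of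
`U = (2 B Bᴴ - I)(2 A Aᴴ - I)`; in particular, when `N > s + t`, the eigenvalue `1` of `U`
has algebraic multiplicity at least `N - s - t`. -/
theorem one_is_eigenvalue_of_multiplicity
    (N s t : ℕ) (A : Matrix (Fin N) (Fin s) ℂ) (B : Matrix (Fin N) (Fin t) ℂ)
    (hA : Aᴴ * A = 1) (hB : Bᴴ * B = 1) (hN : s + t ≤ N) :
    ((X - 1) ^ (N - s - t) ∣
        (((2 : ℂ) • (B * Bᴴ) - 1) * ((2 : ℂ) • (A * Aᴴ) - 1)).charpoly) ∧
      (s + t < N →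
        N - s - t ≤
          ((((2 : ℂ) • (B * Bᴴ) - 1) * ((2 : ℂ) • (A * Aᴴ) - 1)).charpoly).rootMultiplicity 1) := by
  set UB : Matrix (Fin N) (Fin N) ℂ := (2 : ℂ) • (B * Bᴴ) - 1 with hUBdef
  set UA : Matrix (Fin N) (Fin N) ℂ := (2 : ℂ) • (A * Aᴴ) - 1 with hUAdef
  set U : Matrix (Fin N) (Fin N) ℂ := UB * UA with hUdef
  -- UB is an involution
  have hBB : (B * Bᴴ) * (B * Bᴴ) = B * Bᴴ := by
    calc (B * Bᴴ) * (B * Bᴴ) = B * (Bᴴ * B) * Bᴴ := by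
          rw [Matrix.mul_assoc, Matrix.mul_assoc, Matrix.mul_assoc]
      _ = B * Bᴴ := by rw [hB, Matrix.mul_one]
  have hUB2 : UB * UB = 1 := by
    rw [hUBdef]
    simp only [Matrix.sub_mul, Matrix.mul_sub, Matrix.smul_mul, Matrix.mul_smul, smul_smul,
      Matrix.one_mul, Matrix.mul_one, hBB]
    module
  -- U - 1 factors through a rank ≤ s + t matrix
  set P : Matrix (Fin N) (Fin s ⊕ Fin t) ℂ := UB * fromCols A B with hPdef
  set Q : Matrix (Fin s ⊕ Fin t) (Fin N) ℂ := fromRows ((2 : ℂ) • Aᴴ) ((-2 : ℂ) • Bᴴ)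
    with hQdef
  have hPQ : P * Q = U - 1 := by
    rw [hPdef, hQdef, Matrix.mul_assoc, fromCols_mul_fromRows]
    rw [Matrix.mul_smul, Matrix.mul_smul]
    have h3 : (2 : ℂ) • (A * Aᴴ) + (-2 : ℂ) • (B * Bᴴ) = UA - UB := by
      rw [hUAdef, hUBdef, neg_smul]
      abel
    rw [h3, Matrix.mul_sub, ← hUdef, hUB2]
  -- divisibility for U - 1
  have hdvd1 : X ^ (N - s - t) ∣ (U - 1).charpoly := by
    have hcard : Fintype.card (Fin s ⊕ Fin t) = s + t := by simp
    have hcardN : Fintype.card (Fin N) = N := by simp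
    have hle : Fintype.card (Fin s ⊕ Fin t) ≤ Fintype.card (Fin N) := by
      rw [hcard, hcardN]; exact hN
    have h4 := charpoly_mul_comm_pow P Q hle
    rw [hPQ, hcard, hcardN, ← Nat.sub_sub] at h4
    exact ⟨(Q * P).charpoly, h4.symm⟩
  -- transfer to U via translation
  have htrans : (aeval (R := ℂ) (X + 1 : ℂ[X])).toRingHom U.charpoly = (U - 1).charpoly :=
    aux_charpoly_sub_one U
  have hdvdU : (X - 1) ^ (N - s - t) ∣ U.charpoly := by
    have hdvd2 : X ^ (N - s - t) ∣ (aeval (R := ℂ) (X + 1 : ℂ[X])).toRingHom U.charpoly := by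
      rw [htrans]; exact hdvd1
    have h5 := map_dvd (aeval (R := ℂ) (X - 1 : ℂ[X])).toRingHom hdvd2
    rw [map_pow] at h5
    have hX : (aeval (R := ℂ) (X - 1 : ℂ[X])).toRingHom X = X - 1 := by simp
    have hcomp : (aeval (R := ℂ) (X - 1 : ℂ[X])).toRingHom ((aeval (R := ℂ) (X + 1 : ℂ[X])).toRingHom U.charpoly)
        = U.charpoly := by
      simp only [AlgHom.toRingHom_eq_coe, RingHom.coe_coe]
      rw [← comp_eq_aeval, ← comp_eq_aeval, Polynomial.comp_assoc]
      simp
    rw [hX, hcomp] at h5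
    exact h5
  refine ⟨hdvdU, fun _ => ?_⟩
  rw [Polynomial.le_rootMultiplicity_iff (U.charpoly_monic.ne_zero)]
  simpa using hdvdU
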